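/- Let ζ_t, ζ_b ∈ (-1,1), let A = [[ζ_tζ_b−1, ζ_t(1−ζ_tζ_b), ζ_b−ζ_t], [ζ_b−ζ_t, 1−ζ_tζ_b, ζ_tζ_b−1], [0, 1−ζ_t², 0]] and D = [[1, −ζ_t, −ζ_b], [−ζ_t, 1, ζ_tζ_b], [−ζ_b, ζ_tζ_b, 1]]. Then the matrix P = D⁻¹ · (Aᵀ)⁻¹ · D · A is conjugate in GL(3,ℝ) to the matrix [[−1,1,0],[0,−1,0],[0,0,1]]; in particular P is not diagonalizable. -/

import Mathlib

open Matrix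

set_option maxHeartbeats 1600000 in
/-- For a convex marked box, the matrix `P = D⁻¹ (Aᵀ)⁻¹ D A` is conjugate in `GL(3,ℝ)`
to `[[−1,1,0],[0,−1,0],[0,0,1]]`; in particular `P` is not diagonalizable. -/
theorem schwartz_P_conjugate_nondiagonalizable (ζt ζb : ℝ)
    (ht : ζt ∈ Set.Ioo (-1 : ℝ) 1) (hb : ζb ∈ Set.Ioo (-1 : ℝ) 1) :
    let A : Matrix (Fin 3) (Fin 3) ℝ :=
      !![ζt * ζb - 1, ζt * (1 - ζt * ζb), ζb - ζt;
         ζb - ζt, 1 - ζt * ζb, ζt * ζb - 1;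
         0, 1 - ζt ^ 2, 0]
    let D : Matrix (Fin 3) (Fin 3) ℝ :=
      !![1, -ζt, -ζb; -ζt, 1, ζt * ζb; -ζb, ζt * ζb, 1]
    let P : Matrix (Fin 3) (Fin 3) ℝ := D⁻¹ * (Aᵀ)⁻¹ * D * A
    (∃ Q : GL (Fin 3) ℝ,
      (↑(Q⁻¹) : Matrix (Fin 3) (Fin 3) ℝ) * P * (↑Q : Matrix (Fin 3) (Fin 3) ℝ) =
        !![(-1 : ℝ), 1, 0; 0, -1, 0; 0, 0, 1]) ∧
    ¬ ∃ (Q : GL (Fin 3) ℝ) (d : Fin 3 → ℝ),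
      (↑(Q⁻¹) : Matrix (Fin 3) (Fin 3) ℝ) * P * (↑Q : Matrix (Fin 3) (Fin 3) ℝ) = Matrix.diagonal d := by
  intro A D P
  obtain ⟨ht1, ht2⟩ := ht
  obtain ⟨hb1, hb2⟩ := hb
  have hpt : (0:ℝ) < 1 - ζt ^ 2 := by nlinarith
  have hpb : (0:ℝ) < 1 - ζb ^ 2 := by nlinarith
  set J : Matrix (Fin 3) (Fin 3) ℝ := !![(-1 : ℝ), 1, 0; 0, -1, 0; 0, 0, 1] with hJ
  set M : Matrix (Fin 3) (Fin 3) ℝ :=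
    !![ζb, 0, 1; 0, (1 - ζb ^ 2) / 2, 0; 1, 0, ζb] with hM
  have hdA : A.det ≠ 0 := by
    have h : A.det = -((1 - ζt ^ 2) ^ 2 * (1 - ζb ^ 2)) := by
      simp [A, Matrix.det_fin_three]; ring
    rw [h]; exact neg_ne_zero.mpr (ne_of_gt (mul_pos (pow_pos hpt 2) hpb))
  have hdD : D.det ≠ 0 := by
    have h : D.det = (1 - ζt ^ 2) * (1 - ζb ^ 2) := by
      simp [D, Matrix.det_fin_three]; ring
    rw [h]; exact ne_of_gt (mul_pos hpt hpb)
  have hdM : M.det ≠ 0 := by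
    have h : M.det = -((1 - ζb ^ 2) ^ 2 / 2) := by
      simp [hM, Matrix.det_fin_three]; ring
    rw [h]; exact neg_ne_zero.mpr (ne_of_gt (by positivity))
  haveI : Invertible A := A.invertibleOfIsUnitDet (isUnit_iff_ne_zero.mpr hdA)
  haveI : Invertible D := D.invertibleOfIsUnitDet (isUnit_iff_ne_zero.mpr hdD)
  haveI : Invertible M := M.invertibleOfIsUnitDet (isUnit_iff_ne_zero.mpr hdM)
  haveI : Invertible Aᵀ := A.invertibleTranspose
  have hu : IsUnit M := (Matrix.isUnit_iff_isUnit_det M).mpr (isUnit_iff_ne_zero.mpr hdM)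
  have hAT : Aᵀ = !![ζt * ζb - 1, ζb - ζt, 0;
      ζt * (1 - ζt * ζb), 1 - ζt * ζb, 1 - ζt ^ 2;
      ζb - ζt, ζt * ζb - 1, 0] := by
    ext i j
    fin_cases i <;> fin_cases j <;> simp [A, Matrix.transpose_apply]
  -- key polynomial identity
  have key2 : D * A * M = Aᵀ * D * (M * J) := by
    rw [hAT]
    ext i j
    fin_cases i <;> fin_cases j <;>
      simp [A, D, hM, hJ, Matrix.mul_apply, Fin.sum_univ_three] <;> ring
  have key : P * M = M * J := by
    have h1 : (Aᵀ)⁻¹ * (D * A * M) = D * (M * J) := by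
      rw [key2, Matrix.mul_assoc (Aᵀ) D (M * J)]
      exact Matrix.inv_mul_cancel_left_of_invertible _ _
    calc P * M = D⁻¹ * ((Aᵀ)⁻¹ * (D * A * M)) := by
          simp only [P, Matrix.mul_assoc]
      _ = D⁻¹ * (D * (M * J)) := by rw [h1]
      _ = M * J := Matrix.inv_mul_cancel_left_of_invertible _ _
  have goal1 : M⁻¹ * P * M = J := by
    rw [Matrix.mul_assoc, key, ← Matrix.mul_assoc]
    rw [Matrix.nonsing_inv_mul M (isUnit_iff_ne_zero.mpr hdM), Matrix.one_mul]
  have hP : P = M * J * M⁻¹ := by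
    rw [← key, Matrix.mul_assoc, Matrix.mul_nonsing_inv M (isUnit_iff_ne_zero.mpr hdM),
      Matrix.mul_one]
  refine ⟨⟨hu.unit, ?_⟩, ?_⟩
  · rw [Matrix.coe_units_inv, hu.unit_spec]
    exact goal1
  · rintro ⟨R, d, hR⟩
    set Rm : Matrix (Fin 3) (Fin 3) ℝ := (↑R : Matrix (Fin 3) (Fin 3) ℝ) with hRm
    have hRinv : (↑(R⁻¹) : Matrix (Fin 3) (Fin 3) ℝ) * Rm = 1 := by
      rw [hRm, ← Units.val_mul, inv_mul_cancel]; rfl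
    have hRinv' : Rm * (↑(R⁻¹) : Matrix (Fin 3) (Fin 3) ℝ) = 1 := by
      rw [hRm, ← Units.val_mul, mul_inv_cancel]; rfl
    -- similarity between J and diagonal d
    set V : Matrix (Fin 3) (Fin 3) ℝ := M⁻¹ * Rm with hV
    set W : Matrix (Fin 3) (Fin 3) ℝ := (↑(R⁻¹) : Matrix (Fin 3) (Fin 3) ℝ) * M with hW
    have hWV : W * V = 1 := by
      rw [hW, hV, Matrix.mul_assoc, ← Matrix.mul_assoc M M⁻¹ Rm,
        Matrix.mul_nonsing_inv M (isUnit_iff_ne_zero.mpr hdM), Matrix.one_mul, hRinv]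
    have hVW : V * W = 1 := by
      rw [hV, hW, Matrix.mul_assoc, ← Matrix.mul_assoc Rm _ M, hRinv', Matrix.one_mul,
        Matrix.nonsing_inv_mul M (isUnit_iff_ne_zero.mpr hdM)]
    have hsim : W * J * V = Matrix.diagonal d := by
      rw [← hR, hP]
      rw [hW, hV]
      calc (↑(R⁻¹) : Matrix (Fin 3) (Fin 3) ℝ) * M * J * (M⁻¹ * Rm)
          = (↑(R⁻¹) : Matrix (Fin 3) (Fin 3) ℝ) * (M * J * M⁻¹) * Rm := by
            simp only [Matrix.mul_assoc]
        _ = _ := rfl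
    -- each d i satisfies (d i)^2 = 1
    have hdsq : ∀ i, d i * d i = 1 := by
      intro i
      have hsub : ∀ x : ℝ, J - x • (1 : Matrix (Fin 3) (Fin 3) ℝ) =
          !![-1 - x, 1, 0; 0, -1 - x, 0; 0, 0, 1 - x] := by
        intro x
        ext a b
        fin_cases a <;> fin_cases b <;> simp [hJ, Matrix.one_apply] <;> ring
      have hdiagsub : Matrix.diagonal d - d i • (1 : Matrix (Fin 3) (Fin 3) ℝ) =
          Matrix.diagonal (fun j => d j - d i) := by
        ext a b
        rcases eq_or_ne a b with h | h <;>
          simp [h, Matrix.diagonal_apply, Matrix.one_apply]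
      have hconj : W * (J - d i • (1 : Matrix (Fin 3) (Fin 3) ℝ)) * V =
          Matrix.diagonal d - d i • (1 : Matrix (Fin 3) (Fin 3) ℝ) := by
        rw [Matrix.mul_sub, Matrix.sub_mul, hsim, Matrix.mul_smul, Matrix.mul_one,
          Matrix.smul_mul, hWV]
      have hdet0 : (Matrix.diagonal d - d i • (1 : Matrix (Fin 3) (Fin 3) ℝ)).det = 0 := by
        rw [hdiagsub, Matrix.det_diagonal]
        exact Finset.prod_eq_zero (Finset.mem_univ i) (by simp)
      have hdetWV : W.det * V.det = 1 := by
        rw [← Matrix.det_mul, hWV, Matrix.det_one]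
      have hdetJ : (J - d i • (1 : Matrix (Fin 3) (Fin 3) ℝ)).det = 0 := by
        have h := congrArg Matrix.det hconj
        rw [Matrix.det_mul, Matrix.det_mul, hdet0] at h
        have hV0 : V.det ≠ 0 := by
          intro h0
          rw [h0, mul_zero] at hdetWV
          exact one_ne_zero hdetWV.symm
        have hW0 : W.det ≠ 0 := by
          intro h0
          rw [h0, zero_mul] at hdetWV
          exact one_ne_zero hdetWV.symm
        rcases mul_eq_zero.mp h with h' | h'
        · rcases mul_eq_zero.mp h' with h'' | h''
          · exact absurd h'' hW0
          · exact h''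
        · exact absurd h' hV0
      have hdetexpand : ∀ x : ℝ, (!![-1 - x, 1, 0; 0, -1 - x, 0; 0, 0, 1 - x] :
          Matrix (Fin 3) (Fin 3) ℝ).det = (-1 - x) * (-1 - x) * (1 - x) := by
        intro x
        simp [Matrix.det_fin_three]
      rw [hsub, hdetexpand] at hdetJ
      have : (d i + 1) ^ 2 * (1 - d i) = 0 := by linear_combination hdetJ
      rcases mul_eq_zero.mp this with h' | h'
      · have : d i = -1 := by
          have := pow_eq_zero_iff (n := 2) (by norm_num) |>.mp h'
          linarith
        rw [this]; ring
      · have : d i = 1 := by linarith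
        rw [this]; ring
    -- hence (diagonal d)^2 = 1 and J^2 = 1, contradiction
    have hN2 : Matrix.diagonal d * Matrix.diagonal d = 1 := by
      have hfun : (fun i => d i * d i) = fun _ => (1 : ℝ) := funext hdsq
      rw [Matrix.diagonal_mul_diagonal, hfun, Matrix.diagonal_one]
    have hJeq : J = V * Matrix.diagonal d * W := by
      rw [← hsim]
      calc J = (V * W) * J * (V * W) := by rw [hVW, Matrix.one_mul, Matrix.mul_one]
        _ = V * (W * J * V) * W := by simp only [Matrix.mul_assoc]
    have hJ2 : J * J = 1 := by
      calc J * J = V * Matrix.diagonal d * (W * V) * Matrix.diagonal d * W := by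
            rw [hJeq]; simp only [Matrix.mul_assoc]
        _ = V * (Matrix.diagonal d * Matrix.diagonal d) * W := by
            rw [hWV, Matrix.mul_one]; simp only [Matrix.mul_assoc]
        _ = V * W := by rw [hN2, Matrix.mul_one]
        _ = 1 := hVW
    have : (J * J) 0 1 = (-2 : ℝ) := by
      norm_num [hJ, Matrix.mul_apply, Fin.sum_univ_three, Matrix.cons_val_two, Matrix.tail_cons,
        Matrix.head_cons]
    rw [hJ2] at this
    simp [Matrix.one_apply] at this
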